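/- With the same notation and nonvanishing assumptions as in the finite geometric progression formula, and additionally z ≠ 0, for every n ≥ 0 one has (1 - w z^{-1}) · ∑_{k=0}^{n} (1 - α_{k+1} β_{k+1}) · [z·(z;α)^k / (z|β)^{k+1}] · [(w|β)^k / (w;α)^{k+1}] = 1 - [(z;α)^{n+1} / (z|β)^{n+1}] · [(w|β)^{n+1} / (w;α)^{n+1}]. -/

import Mathlib

open Finset

/-- The shifted power `(z|γ)^k = ∏_{j=1}^k (z - γ_j)` for `k ≥ 0`. -/
noncomputable def barPow {K : Type*} [Field K] (z : K) (γ : ℕ → K) (k : ℕ) : K :=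
  ∏ j ∈ range k, (z - γ (j + 1))

/-- The shifted power `(z;γ)^k = ∏_{j=1}^k (1 - z γ_j)` for `k ≥ 0`. -/
noncomputable def semiPow {K : Type*} [Field K] (z : K) (γ : ℕ → K) (k : ℕ) : K :=
  ∏ j ∈ range k, (1 - z * γ (j + 1))

lemma barPow_succ {K : Type*} [Field K] (z : K) (γ : ℕ → K) (k : ℕ) :
    barPow z γ (k + 1) = barPow z γ k * (z - γ (k + 1)) := by
  simp [barPow, prod_range_succ]

lemma semiPow_succ {K : Type*} [Field K] (z : K) (γ : ℕ → K) (k : ℕ) :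
    semiPow z γ (k + 1) = semiPow z γ k * (1 - z * γ (k + 1)) := by
  simp [semiPow, prod_range_succ]

lemma barPow_ne_zero {K : Type*} [Field K] {z : K} {γ : ℕ → K}
    (h : ∀ j, z - γ j ≠ 0) (k : ℕ) : barPow z γ k ≠ 0 :=
  prod_ne_zero_iff.2 fun j _ => h _

lemma semiPow_ne_zero {K : Type*} [Field K] {z : K} {γ : ℕ → K}
    (h : ∀ j, 1 - z * γ j ≠ 0) (k : ℕ) : semiPow z γ k ≠ 0 :=
  prod_ne_zero_iff.2 fun j _ => h _

lemma key {K : Type*} [Field K] (α β : ℕ → K) (z w : K) (hz : z ≠ 0)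
    (hzβ : ∀ j, z - β j ≠ 0) (hwα : ∀ j, 1 - w * α j ≠ 0) (k : ℕ) :
    (1 - w * z⁻¹) *
        ((1 - α (k + 1) * β (k + 1)) * (z * semiPow z α k / barPow z β (k + 1)) *
          (barPow w β k / semiPow w α (k + 1))) =
      semiPow z α k / barPow z β k * (barPow w β k / semiPow w α k) -
        semiPow z α (k + 1) / barPow z β (k + 1) * (barPow w β (k + 1) / semiPow w α (k + 1)) := by
  rw [barPow_succ z β k, semiPow_succ z α k, barPow_succ w β k, semiPow_succ w α k]
  have h1 := barPow_ne_zero hzβ k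
  have h2 := semiPow_ne_zero hwα k
  have h3 := hzβ (k + 1)
  have h4 := hwα (k + 1)
  field_simp
  ring

/-- Variant of the finite geometric progression formula for shifted powers,
obtained by the substitution `z ↦ z⁻¹`. -/
theorem stmt_2 {K : Type*} [Field K] (α β : ℕ → K) (z w : K) (hz : z ≠ 0)
    (hzβ : ∀ j, z - β j ≠ 0) (hwα : ∀ j, 1 - w * α j ≠ 0) (n : ℕ) :
    (1 - w * z⁻¹) * ∑ k ∈ range (n + 1),
        (1 - α (k + 1) * β (k + 1)) * (z * semiPow z α k / barPow z β (k + 1)) *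
          (barPow w β k / semiPow w α (k + 1)) =
      1 - (semiPow z α (n + 1) / barPow z β (n + 1)) *
        (barPow w β (n + 1) / semiPow w α (n + 1)) := by
  rw [mul_sum]
  have := Finset.sum_range_sub' (fun k => semiPow z α k / barPow z β k *
      (barPow w β k / semiPow w α k)) (n + 1)
  simp only [key α β z w hz hzβ hwα, this]
  simp [barPow, semiPow]
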